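/- For every even integer k ≥ 4, the numerator N_k of the Bernoulli number B_k satisfies |N_k| < 2^β, where β = ⌈(k + 0.5)·log₂ k − 4.094·k + 2.470 + log₂ D_k⌉ and D_k is the (positive) denominator of B_k in lowest terms. -/

import Mathlib

open Real Stirling

noncomputable def Fb (k : ℕ) : ℝ :=
  ((k : ℕ) : ℝ) ^ k * Real.sqrt (k : ℝ) * (((2:ℝ) ^ ((4.094:ℝ))) ^ k)⁻¹ * (2:ℝ) ^ ((2.47:ℝ))

lemma rpow_2047 : ((2:ℝ) ^ ((4.094:ℝ))) ^ (500:ℕ) = (2:ℝ) ^ (2047:ℕ) := by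
  rw [← Real.rpow_natCast ((2:ℝ) ^ ((4.094:ℝ))) 500, ← Real.rpow_mul (by norm_num : (0:ℝ) ≤ 2),
    ← Real.rpow_natCast 2 2047]
  norm_num

lemma N1 : (2:ℝ) ^ ((4.094:ℝ)) ≤ 2 * π * Real.exp 1 := by
  have h3 : (2:ℝ) ^ ((4.094:ℝ)) ≤ 17.07946 := by
    refine le_of_pow_le_pow_left₀ (n := 500) (by norm_num) (by norm_num) ?_
    rw [rpow_2047]; norm_num
    rw [div_pow, le_div_iff₀ (by positivity)]; exact_mod_cast (by decide +kernel : (2:ℕ) ^ 2047 * 50000 ^ 500 ≤ 853973 ^ 500)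
  refine h3.trans ?_
  nlinarith [Real.pi_gt_d6, Real.exp_one_gt_d9]

lemma N52 : (5.2:ℝ) < (2:ℝ) ^ ((2.47:ℝ)) := by
  have h1 : ((2:ℝ) ^ ((2.47:ℝ))) ^ (100:ℕ) = (2:ℝ) ^ (247:ℕ) := by
    rw [← Real.rpow_natCast ((2:ℝ) ^ ((2.47:ℝ))) 100, ← Real.rpow_mul (by norm_num : (0:ℝ) ≤ 2),
      ← Real.rpow_natCast 2 247]
    norm_num
  refine lt_of_pow_lt_pow_left₀ 100 (by positivity) ?_
  rw [h1]; norm_num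

lemma stirling_six_le : stirlingSeq 6 ≤ 1.798 := by
  have hexp : Real.exp 1 ≤ 2.7182819 := by
    have := Real.exp_one_lt_d9
    linarith
  have he : (6:ℝ)/2.7182819 ≤ 6 / Real.exp 1 :=
    div_le_div_of_nonneg_left (by norm_num) (Real.exp_pos 1) hexp
  have hpow : ((6:ℝ)/2.7182819) ^ (6:ℕ) ≤ ((6:ℝ) / Real.exp 1) ^ (6:ℕ) :=
    pow_le_pow_left₀ (by positivity) he 6
  have h12 : (3.4641:ℝ) ≤ Real.sqrt 12 :=
    (Real.le_sqrt (by norm_num) (by norm_num)).mpr (by norm_num)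
  have hpos : (0:ℝ) < Real.sqrt 12 * ((6:ℝ) / Real.exp 1) ^ (6:ℕ) := by positivity
  have heq : stirlingSeq 6 = 720 / (Real.sqrt 12 * ((6:ℝ) / Real.exp 1) ^ (6:ℕ)) := by
    rw [stirlingSeq]
    norm_num [Nat.factorial]
  rw [heq, div_le_iff₀ hpos]
  calc (720:ℝ) ≤ 1.798 * (3.4641 * ((6:ℝ)/2.7182819) ^ (6:ℕ)) := by norm_num
    _ ≤ 1.798 * (Real.sqrt 12 * ((6:ℝ) / Real.exp 1) ^ (6:ℕ)) := by
        have h1 : (3.4641:ℝ) * ((6:ℝ)/2.7182819) ^ (6:ℕ)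
            ≤ Real.sqrt 12 * ((6:ℝ) / Real.exp 1) ^ (6:ℕ) :=
          mul_le_mul h12 hpow (by positivity) (Real.sqrt_nonneg _)
        nlinarith [h1]

lemma factorial_le_stirling (k : ℕ) (hk : 6 ≤ k) :
    (k.factorial : ℝ) ≤ stirlingSeq 6 * (Real.sqrt (2 * (k:ℝ)) * ((k:ℝ) / Real.exp 1) ^ k) := by
  have hk0 : (0:ℝ) < (k:ℝ) := by
    have : 0 < k := by omega
    exact_mod_cast this
  have hd : (0:ℝ) < Real.sqrt (2 * (k:ℝ)) * ((k:ℝ) / Real.exp 1) ^ k := by positivity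
  have heq : (k.factorial : ℝ) = stirlingSeq k * (Real.sqrt (2 * (k:ℝ)) * ((k:ℝ) / Real.exp 1) ^ k) := by
    rw [stirlingSeq, div_mul_cancel₀ _ hd.ne']
  have hmono : stirlingSeq k ≤ stirlingSeq 6 := by
    have h := stirlingSeq'_antitone (show 5 ≤ k - 1 by omega)
    simpa [Function.comp, Nat.succ_eq_add_one, Nat.sub_add_cancel (show 1 ≤ k by omega)] using h
  rw [heq]
  exact mul_le_mul_of_nonneg_right hmono hd.le

lemma zeta_sum_le (m : ℕ) (hm : 3 ≤ m) {S : ℝ}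
    (hS : HasSum (fun n : ℕ => 1 / (n : ℝ) ^ (2 * m)) S) :
    S ≤ 1 + (1/2:ℝ) ^ (2*m - 4) * (π ^ 4 / 90 - 1) := by
  classical
  have h4 : HasSum (fun n : ℕ => (1/2:ℝ) ^ (2*m-4) * (1 / (n:ℝ) ^ 4))
      ((1/2:ℝ) ^ (2*m-4) * (π ^ 4 / 90)) := hasSum_zeta_four.mul_left _
  have hupd := h4.update 1 1
  have hval : (1:ℝ) - (1/2:ℝ) ^ (2*m-4) * (1 / ((1:ℕ):ℝ) ^ 4)
      + (1/2:ℝ) ^ (2*m-4) * (π ^ 4 / 90)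
      = 1 + (1/2:ℝ) ^ (2*m - 4) * (π ^ 4 / 90 - 1) := by
    push_cast; ring
  rw [hval] at hupd
  refine hasSum_le (fun n => ?_) hS hupd
  rcases n with _ | n
  · rw [Function.update_of_ne (by norm_num : (0:ℕ) ≠ 1)]
    simp only [Nat.cast_zero, zero_pow (by omega : 2*m ≠ 0), div_zero]
    positivity
  rcases n with _ | n
  · simp [Function.update_self]
  · rw [Function.update_of_ne (by omega : (n+2:ℕ) ≠ 1)]
    have hx : (2:ℝ) ≤ ((n+2:ℕ):ℝ) := by exact_mod_cast (by omega : 2 ≤ n+2)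
    have hx0 : (0:ℝ) < ((n+2:ℕ):ℝ) := by linarith
    have hsplit : (1:ℝ) / ((n+2:ℕ):ℝ) ^ (2*m)
        = (1/((n+2:ℕ):ℝ)) ^ (2*m-4) * (1 / ((n+2:ℕ):ℝ) ^ 4) := by
      rw [div_pow, one_pow, div_mul_div_comm, one_mul, ← pow_add]
      congr 2
      omega
    rw [hsplit]
    refine mul_le_mul_of_nonneg_right ?_ (by positivity)
    refine pow_le_pow_left₀ (by positivity) ?_ _
    rw [div_le_div_iff₀ hx0 (by norm_num)]
    linarith

lemma bernoulli_abs_lt (m : ℕ) (hm : 3 ≤ m) :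
    |((bernoulli (2*m) : ℚ) : ℝ)| < Fb (2*m) := by
  have hS := hasSum_zeta_nat (show m ≠ 0 by omega)
  set B : ℝ := ((bernoulli (2*m) : ℚ) : ℝ) with hB
  set S : ℝ := (-1:ℝ) ^ (m+1) * 2 ^ (2*m-1) * π ^ (2*m) * B / ((2*m).factorial : ℝ) with hSdef
  have hSnn : 0 ≤ S := hS.nonneg fun n => by positivity
  have hfac : (0:ℝ) < ((2*m).factorial : ℝ) := by exact_mod_cast Nat.factorial_pos _
  have hden : (0:ℝ) < (2:ℝ) ^ (2*m-1) * π ^ (2*m) := by positivity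
  -- |B| in terms of S
  have habs : |B| = S * ((2*m).factorial : ℝ) / ((2:ℝ) ^ (2*m-1) * π ^ (2*m)) := by
    have h1 : |S| = (2:ℝ) ^ (2*m-1) * π ^ (2*m) * |B| / ((2*m).factorial : ℝ) := by
      rw [hSdef, abs_div, abs_mul, abs_mul, abs_mul, abs_pow, abs_pow, abs_pow, abs_neg, abs_one,
        one_pow, one_mul, abs_two, abs_of_pos pi_pos, abs_of_pos hfac]
    rw [abs_of_nonneg hSnn] at h1
    field_simp
    field_simp at h1
    linarith
  -- bound on S
  have hZ := zeta_sum_le m hm hS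
  set Z : ℝ := 1 + (1/2:ℝ) ^ (2*m - 4) * (π ^ 4 / 90 - 1) with hZdef
  have hπd : (0:ℝ) ≤ π ^ 4 / 90 - 1 := by
    have h4 : (3.141592:ℝ) ^ 4 < π ^ 4 := by
      apply pow_lt_pow_left₀ Real.pi_gt_d6 (by norm_num)
      norm_num
    have h90 : (90:ℝ) ≤ (3.141592:ℝ) ^ 4 := by norm_num
    linarith
  have hZ0 : (0:ℝ) ≤ Z := by positivity
  have hZle : Z ≤ 1.0206 := by
    have hc : (1/2:ℝ) ^ (2*m-4) ≤ (1/2:ℝ) ^ (2:ℕ) :=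
      pow_le_pow_of_le_one (by norm_num) (by norm_num) (by omega)
    have hπ4 : π ^ 4 ≤ 3.141593 ^ 4 :=
      pow_le_pow_left₀ Real.pi_pos.le Real.pi_lt_d6.le 4
    have h1 : (1/2:ℝ) ^ (2*m-4) * (π ^ 4 / 90 - 1) ≤ (1/4:ℝ) * (π ^ 4 / 90 - 1) := by
      refine mul_le_mul_of_nonneg_right ?_ hπd
      norm_num at hc ⊢; linarith
    nlinarith [h1]
  -- factorial bound
  have hfact := factorial_le_stirling (2*m) (by omega)
  have hA0 : (0:ℝ) < stirlingSeq 6 := stirlingSeq'_pos 5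
  have hAle := stirling_six_le
  set t : ℝ := ((2*m : ℕ) : ℝ) with ht
  have ht0 : (0:ℝ) < t := by
    rw [ht]; exact_mod_cast (by omega : 0 < 2*m)
  have ht6 : (6:ℝ) ≤ t := by rw [ht]; exact_mod_cast (by omega : 6 ≤ 2*m)
  -- combine
  unfold Fb
  have hG0 : (0:ℝ) < Real.sqrt t * t ^ (2*m) := by positivity
  have hI40 : (0:ℝ) < (((2:ℝ) ^ ((4.094:ℝ))) ^ (2*m))⁻¹ := by positivity
  have hstep1 : |B| ≤ Z * (stirlingSeq 6 * (Real.sqrt (2*t) * (t / Real.exp 1) ^ (2*m)))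
      / ((2:ℝ) ^ (2*m-1) * π ^ (2*m)) := by
    rw [habs]
    gcongr ?_ / ?_
    · exact mul_le_mul hZ hfact hfac.le hZ0
  have hstep2 : Z * (stirlingSeq 6 * (Real.sqrt (2*t) * (t / Real.exp 1) ^ (2*m)))
      / ((2:ℝ) ^ (2*m-1) * π ^ (2*m))
      = (2 * Z * stirlingSeq 6 * Real.sqrt 2) * (Real.sqrt t * t ^ (2*m))
        * ((2 * π * Real.exp 1) ^ (2*m))⁻¹ := by
    rw [Real.sqrt_mul (by norm_num : (0:ℝ) ≤ 2) t, mul_pow, mul_pow, div_pow,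
      show (2:ℝ) ^ (2*m) = 2 * 2 ^ (2*m-1) by rw [← pow_succ']; congr 1; omega]
    have hpn : π ^ (2*m) ≠ 0 := by positivity
    have hen : Real.exp 1 ^ (2*m) ≠ 0 := by positivity
    have h2n : (2:ℝ) ^ (2*m-1) ≠ 0 := by positivity
    field_simp
  have hstep3 : ((2 * π * Real.exp 1) ^ (2*m))⁻¹ ≤ (((2:ℝ) ^ ((4.094:ℝ))) ^ (2*m))⁻¹ := by
    have hp1 : (0:ℝ) < ((2:ℝ) ^ ((4.094:ℝ))) ^ (2*m) := by positivity
    have hle : ((2:ℝ) ^ ((4.094:ℝ))) ^ (2*m) ≤ (2 * π * Real.exp 1) ^ (2*m) :=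
      pow_le_pow_left₀ (by positivity) N1 _
    exact inv_anti₀ hp1 hle
  have hC : 2 * Z * stirlingSeq 6 * Real.sqrt 2 < (2:ℝ) ^ ((2.47:ℝ)) := by
    have hs2 : Real.sqrt 2 ≤ 1.41422 := by
      have h := Real.sqrt_le_sqrt (show (2:ℝ) ≤ 1.41422 ^ 2 by norm_num)
      rwa [Real.sqrt_sq (by norm_num)] at h
    have h1 : 2 * Z ≤ 2 * (1.0206:ℝ) := by linarith
    have h2 : 2 * Z * stirlingSeq 6 ≤ 2 * 1.0206 * 1.798 :=
      mul_le_mul h1 hAle hA0.le (by norm_num)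
    have h4 : 2 * Z * stirlingSeq 6 * Real.sqrt 2 ≤ 2 * 1.0206 * 1.798 * 1.41422 :=
      mul_le_mul h2 hs2 (Real.sqrt_nonneg 2) (by norm_num)
    have h5 : (2 * 1.0206 * 1.798 * 1.41422 : ℝ) < 5.2 := by norm_num
    linarith [N52]
  have hC0 : 0 ≤ 2 * Z * stirlingSeq 6 * Real.sqrt 2 := by positivity
  calc |B| ≤ Z * (stirlingSeq 6 * (Real.sqrt (2*t) * (t / Real.exp 1) ^ (2*m)))
      / ((2:ℝ) ^ (2*m-1) * π ^ (2*m)) := hstep1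
    _ = (2 * Z * stirlingSeq 6 * Real.sqrt 2) * (Real.sqrt t * t ^ (2*m))
        * ((2 * π * Real.exp 1) ^ (2*m))⁻¹ := hstep2
    _ ≤ (2 * Z * stirlingSeq 6 * Real.sqrt 2) * (Real.sqrt t * t ^ (2*m))
        * (((2:ℝ) ^ ((4.094:ℝ))) ^ (2*m))⁻¹ := by
        exact mul_le_mul_of_nonneg_left hstep3 (by positivity)
    _ < (2:ℝ) ^ ((2.47:ℝ)) * (Real.sqrt t * t ^ (2*m))
        * (((2:ℝ) ^ ((4.094:ℝ))) ^ (2*m))⁻¹ := by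
        exact mul_lt_mul_of_pos_right (mul_lt_mul_of_pos_right hC hG0) hI40
    _ = t ^ (2*m) * Real.sqrt t * (((2:ℝ) ^ ((4.094:ℝ))) ^ (2*m))⁻¹ * (2:ℝ) ^ ((2.47:ℝ)) := by
        ring

lemma bernoulli_abs_lt_four : |((bernoulli 4 : ℚ) : ℝ)| < Fb 4 := by
  have hb4 : (bernoulli 4 : ℚ) = -1/30 := by
    rw [bernoulli_eq_bernoulli'_of_ne_one (by norm_num), bernoulli'_four]
  rw [hb4]
  have h4 : |((-1/30 : ℚ) : ℝ)| = 1/30 := by norm_num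
  rw [h4, Fb]
  have hs : Real.sqrt ((4:ℕ):ℝ) = 2 := by
    rw [show ((4:ℕ):ℝ) = 2^2 by norm_num, Real.sqrt_sq (by norm_num)]
  rw [hs]
  have hp : (((2:ℝ) ^ ((4.094:ℝ))) ^ (4:ℕ)) = (2:ℝ) ^ ((13.906:ℝ)) * (2:ℝ) ^ ((2.47:ℝ)) := by
    rw [← Real.rpow_natCast ((2:ℝ) ^ ((4.094:ℝ))) 4, ← Real.rpow_mul (by norm_num : (0:ℝ) ≤ 2),
      ← Real.rpow_add (by norm_num : (0:ℝ) < 2)]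
    norm_num
  rw [hp]
  have h2 : (2:ℝ) ^ ((13.906:ℝ)) < 15360 := by
    have h1 : ((2:ℝ) ^ ((13.906:ℝ))) ^ (500:ℕ) = (2:ℝ) ^ (6953:ℕ) := by
      rw [← Real.rpow_natCast ((2:ℝ) ^ ((13.906:ℝ))) 500,
        ← Real.rpow_mul (by norm_num : (0:ℝ) ≤ 2), ← Real.rpow_natCast 2 6953]
      norm_num
    refine lt_of_pow_lt_pow_left₀ 500 (by positivity) ?_
    rw [h1]; norm_num
    exact_mod_cast (by decide +kernel : (2:ℕ) ^ 6953 < 15360 ^ 500)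
  have hr : (0:ℝ) < (2:ℝ) ^ ((2.47:ℝ)) := by positivity
  have hr2 : (0:ℝ) < (2:ℝ) ^ ((13.906:ℝ)) := by positivity
  rw [show ((4:ℕ):ℝ) = (4:ℝ) by norm_num]
  rw [mul_inv, ← mul_assoc]
  have heq : (4:ℝ)^(4:ℕ) * 2 * ((2:ℝ) ^ ((13.906:ℝ)))⁻¹ * ((2:ℝ) ^ ((2.47:ℝ)))⁻¹
        * (2:ℝ) ^ ((2.47:ℝ)) = 512 * ((2:ℝ) ^ ((13.906:ℝ)))⁻¹ := by
    field_simp; ring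
  rw [heq]
  rw [show (512:ℝ) * ((2:ℝ)^((13.906:ℝ)))⁻¹ = 512 / (2:ℝ)^((13.906:ℝ)) by ring,
    lt_div_iff₀ hr2]
  nlinarith [h2]

theorem bernoulli_num_bound (k : ℕ) (hk : 4 ≤ k) (hke : Even k)
    (β : ℤ)
    (hβ : β = ⌈((k : ℝ) + 0.5) * Real.logb 2 k - 4.094 * k + 2.470
      + Real.logb 2 ((bernoulli k).den : ℝ)⌉) :
    (|(bernoulli k).num| : ℝ) < 2 ^ (β : ℝ) := by
  -- |B| < Fb k
  have hF : |((bernoulli k : ℚ) : ℝ)| < Fb k := by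
    obtain ⟨m, hm⟩ : ∃ m, k = 2 * m := by
      obtain ⟨r, hr⟩ := hke; exact ⟨r, by omega⟩
    rcases Nat.lt_or_ge m 3 with hm3 | hm3
    · have hk4 : k = 4 := by omega
      rw [hk4]; exact bernoulli_abs_lt_four
    · rw [hm]; exact bernoulli_abs_lt m hm3
  have hden : (0:ℝ) < ((bernoulli k).den : ℝ) := by
    exact_mod_cast (bernoulli k).pos
  have hk0 : (0:ℝ) < (k:ℝ) := by
    have : 0 < k := by omega
    exact_mod_cast this
  -- |num| = |B| * den
  have hnum : (|(bernoulli k).num| : ℝ)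
      = |((bernoulli k : ℚ) : ℝ)| * ((bernoulli k).den : ℝ) := by
    have hcast : ((bernoulli k : ℚ) : ℝ)
        = ((bernoulli k).num : ℝ) / ((bernoulli k).den : ℝ) := by
      rw [Rat.cast_def]
    rw [hcast, abs_div, abs_of_pos hden, div_mul_cancel₀ _ hden.ne']
  set x : ℝ := ((k : ℝ) + 0.5) * Real.logb 2 k - 4.094 * k + 2.470
      + Real.logb 2 ((bernoulli k).den : ℝ) with hx
  have e1 : (2:ℝ) ^ (((k:ℝ) + 0.5) * Real.logb 2 (k:ℝ)) = (k:ℝ) ^ (k:ℕ) * Real.sqrt (k:ℝ) := by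
    rw [mul_comm, Real.rpow_mul (by norm_num : (0:ℝ) ≤ 2),
      Real.rpow_logb two_pos (by norm_num) hk0,
      show ((k:ℝ) + 0.5) = (k:ℝ) + (1/2 : ℝ) by norm_num,
      Real.rpow_add hk0, Real.rpow_natCast, ← Real.sqrt_eq_rpow]
  have e2 : (2:ℝ) ^ (-(4.094 * (k:ℝ))) = (((2:ℝ) ^ ((4.094:ℝ))) ^ (k:ℕ))⁻¹ := by
    rw [Real.rpow_neg (by norm_num : (0:ℝ) ≤ 2), Real.rpow_mul (by norm_num : (0:ℝ) ≤ 2),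
      Real.rpow_natCast]
  have e3 : (2:ℝ) ^ (Real.logb 2 ((bernoulli k).den : ℝ)) = ((bernoulli k).den : ℝ) :=
    Real.rpow_logb two_pos (by norm_num) hden
  have hxF : (2:ℝ) ^ x = Fb k * ((bernoulli k).den : ℝ) := by
    rw [show x = (((k:ℝ) + 0.5) * Real.logb 2 (k:ℝ)) + (-(4.094 * (k:ℝ))) + ((2.470:ℝ))
        + Real.logb 2 ((bernoulli k).den : ℝ) by rw [hx]; ring,
      Real.rpow_add two_pos, Real.rpow_add two_pos, Real.rpow_add two_pos, e1, e2, e3,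
      show (2.470:ℝ) = (2.47:ℝ) by norm_num, Fb]
  have hβx : x ≤ (β:ℝ) := by
    rw [hβ]
    exact_mod_cast Int.le_ceil x
  calc (|(bernoulli k).num| : ℝ)
      = |((bernoulli k : ℚ) : ℝ)| * ((bernoulli k).den : ℝ) := hnum
    _ < Fb k * ((bernoulli k).den : ℝ) := mul_lt_mul_of_pos_right hF hden
    _ = (2:ℝ) ^ x := hxF.symm
    _ ≤ (2:ℝ) ^ ((β:ℤ):ℝ) := by
        exact (Real.rpow_le_rpow_left_iff (by norm_num : (1:ℝ) < 2)).mpr hβx
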